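/- If (θ̂, γ̂) is bivariate normal with mean (θ, γ), Var(θ̂) = σ²v_θ, Var(γ̂) = 1 and Corr(θ̂, γ̂) = ρ, and θ̂_PMS = θ̂ - ρσ v_θ^{1/2} γ̂ · 1{|γ̂| ≤ d} (that is, θ̂_PMS equals θ̂ - ρσ v_θ^{1/2} γ̂ when |γ̂| ≤ d and equals θ̂ otherwise), then E[θ̂_PMS] = θ - ρσ v_θ^{1/2} k(γ), where k(γ) = ∫_{-d}^{d} z φ(z - γ) dz. -/

import Mathlib

open MeasureTheory Real Filter Topology ProbabilityTheory
open scoped ENNReal NNReal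

/-- standard normal density -/
noncomputable def stdφ (x : ℝ) : ℝ := Real.exp (-x ^ 2 / 2) / Real.sqrt (2 * Real.pi)

/-- standard normal cumulative distribution function -/
noncomputable def stdΦ (x : ℝ) : ℝ := ∫ t in Set.Iic x, stdφ t

/-- density of the bivariate normal distribution with means `m1, m2`,
standard deviations `s1, s2` and correlation `ρ` -/
noncomputable def bvnPdf (m1 m2 s1 s2 ρ : ℝ) (p : ℝ × ℝ) : ℝ :=
  (2 * Real.pi * s1 * s2 * Real.sqrt (1 - ρ ^ 2))⁻¹ *
    Real.exp (-(1 / (2 * (1 - ρ ^ 2))) *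
      (((p.1 - m1) / s1) ^ 2 - 2 * ρ * ((p.1 - m1) / s1) * ((p.2 - m2) / s2) +
        ((p.2 - m2) / s2) ^ 2))

/-- auxiliary one-dimensional gaussian density with real variance parameter -/
noncomputable def gpdf (m v x : ℝ) : ℝ :=
  (Real.sqrt (2 * Real.pi * v))⁻¹ * Real.exp (-(x - m) ^ 2 / (2 * v))

lemma gpdf_nonneg (m v x : ℝ) : 0 ≤ gpdf m v x := by
  unfold gpdf; positivity

lemma gpdf_eq (m : ℝ) {v : ℝ} (hv : 0 < v) :
    gpdf m v = gaussianPDFReal m v.toNNReal := by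
  funext x
  simp [gpdf, gaussianPDFReal, Real.coe_toNNReal _ hv.le, neg_div]

lemma gpdf_continuous (m v : ℝ) : Continuous (gpdf m v) := by
  unfold gpdf; fun_prop

lemma lintegral_gpdf (m : ℝ) {v : ℝ} (hv : 0 < v) :
    ∫⁻ x, ENNReal.ofReal (gpdf m v x) = 1 := by
  rw [gpdf_eq m hv]
  exact lintegral_gaussianPDFReal_eq_one m (by simp [Real.toNNReal_eq_zero, not_le, hv])

lemma integrable_gpdf (m : ℝ) {v : ℝ} (hv : 0 < v) : Integrable (gpdf m v) := by
  rw [gpdf_eq m hv]; exact integrable_gaussianPDFReal m v.toNNReal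

lemma integral_gpdf (m : ℝ) {v : ℝ} (hv : 0 < v) : ∫ x, gpdf m v x = 1 := by
  rw [gpdf_eq m hv]
  exact integral_gaussianPDFReal_eq_one m (by simp [Real.toNNReal_eq_zero, not_le, hv])

lemma integral_x_exp (b : ℝ) : ∫ x : ℝ, x * Real.exp (-b * x ^ 2) = 0 := by
  have h := MeasureTheory.integral_neg_eq_self (fun x : ℝ => x * Real.exp (-b * x ^ 2))
    (volume : Measure ℝ)
  simp only [neg_sq, neg_mul] at h
  rw [integral_neg] at h
  simp only [neg_mul] at *
  linarith

lemma integrable_id_mul_gpdf (m : ℝ) {v : ℝ} (hv : 0 < v) :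
    Integrable (fun x => x * gpdf m v x) := by
  have hb : (0:ℝ) < (2 * v)⁻¹ := by positivity
  have hg : Integrable (fun t : ℝ =>
      (Real.sqrt (2 * Real.pi * v))⁻¹ * ((t + m) * Real.exp (-(2 * v)⁻¹ * t ^ 2))) := by
    refine Integrable.const_mul ?_ _
    have h1 : Integrable (fun t : ℝ => t * Real.exp (-(2 * v)⁻¹ * t ^ 2)) :=
      integrable_mul_exp_neg_mul_sq hb
    have h2 : Integrable (fun t : ℝ => m * Real.exp (-(2 * v)⁻¹ * t ^ 2)) :=
      (integrable_exp_neg_mul_sq hb).const_mul m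
    have := h1.add h2
    refine this.congr ?_
    filter_upwards with t
    simp only [Pi.add_apply]
    ring
  have := hg.comp_sub_right m
  refine this.congr ?_
  filter_upwards with x
  have hxv : -(2 * v)⁻¹ * (x - m) ^ 2 = -(x - m) ^ 2 / (2 * v) := by
    field_simp
  simp only [sub_add_cancel, hxv]
  unfold gpdf
  ring

lemma integral_id_mul_gpdf (m : ℝ) {v : ℝ} (hv : 0 < v) :
    ∫ x, x * gpdf m v x = m := by
  have hb : (0:ℝ) < (2 * v)⁻¹ := by positivity
  have hshift := MeasureTheory.integral_add_right_eq_self (μ := volume)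
    (fun x : ℝ => x * gpdf m v x) m
  rw [← hshift]
  have heq : (fun x : ℝ => (x + m) * gpdf m v (x + m)) =
      fun x : ℝ => x * gpdf 0 v x + m * gpdf 0 v x := by
    funext x
    have : gpdf m v (x + m) = gpdf 0 v x := by
      unfold gpdf; ring_nf
    rw [this]; ring
  rw [heq, integral_add ((integrable_id_mul_gpdf 0 hv).congr ?meq)
      ((integrable_gpdf 0 hv).const_mul m)]
  case meq => filter_upwards with x; rfl
  have hzero : ∫ x : ℝ, x * gpdf 0 v x = 0 := by
    have : (fun x : ℝ => x * gpdf 0 v x) =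
        fun x : ℝ => (Real.sqrt (2 * Real.pi * v))⁻¹ * (x * Real.exp (-(2 * v)⁻¹ * x ^ 2)) := by
      funext x
      have hxv : -(2 * v)⁻¹ * x ^ 2 = -(x - 0) ^ 2 / (2 * v) := by
        field_simp
        ring
      rw [hxv]
      unfold gpdf
      ring
    rw [this, integral_const_mul, integral_x_exp, mul_zero]
  rw [hzero, integral_const_mul, integral_gpdf 0 hv, mul_one, zero_add]

lemma sqrt_prod_aux {s r : ℝ} (hs : 0 < s) (hr : 0 ≤ r) :
    Real.sqrt (2 * Real.pi * s ^ 2) * Real.sqrt (2 * Real.pi * r) =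
      2 * Real.pi * s * Real.sqrt r := by
  rw [Real.sqrt_mul (by positivity), Real.sqrt_mul (by positivity : (0:ℝ) ≤ 2 * Real.pi),
    Real.sqrt_sq hs.le]
  have h2 : Real.sqrt (2 * Real.pi) * Real.sqrt (2 * Real.pi) = 2 * Real.pi :=
    Real.mul_self_sqrt (by positivity)
  calc Real.sqrt (2 * Real.pi) * s * (Real.sqrt (2 * Real.pi) * Real.sqrt r)
      = (Real.sqrt (2 * Real.pi) * Real.sqrt (2 * Real.pi)) * s * Real.sqrt r := by ring
    _ = 2 * Real.pi * s * Real.sqrt r := by rw [h2]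

/-- factorization: marginal in the first coordinate -/
lemma bvnPdf_factor_fst {m1 m2 s ρ : ℝ} (hs : 0 < s) (hρ : ρ ^ 2 < 1) (x y : ℝ) :
    bvnPdf m1 m2 s 1 ρ (x, y) =
      gpdf m1 (s ^ 2) x * gpdf (m2 + ρ * (x - m1) / s) (1 - ρ ^ 2) y := by
  have hr : (0:ℝ) < 1 - ρ ^ 2 := by linarith
  have hnorm : ((Real.sqrt (2 * Real.pi * s ^ 2))⁻¹ : ℝ) *
      (Real.sqrt (2 * Real.pi * (1 - ρ ^ 2)))⁻¹ =
      (2 * Real.pi * s * 1 * Real.sqrt (1 - ρ ^ 2))⁻¹ := by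
    rw [← mul_inv, sqrt_prod_aux hs hr.le, mul_one]
  have hexp : -(1 / (2 * (1 - ρ ^ 2))) *
      (((x - m1) / s) ^ 2 - 2 * ρ * ((x - m1) / s) * ((y - m2) / 1) + ((y - m2) / 1) ^ 2) =
      -(x - m1) ^ 2 / (2 * s ^ 2) +
        -(y - (m2 + ρ * (x - m1) / s)) ^ 2 / (2 * (1 - ρ ^ 2)) := by
    field_simp
    ring
  unfold bvnPdf gpdf
  dsimp only
  rw [hexp, Real.exp_add, ← hnorm]
  ring

/-- factorization: marginal in the second coordinate -/
lemma bvnPdf_factor_snd {m1 m2 s ρ : ℝ} (hs : 0 < s) (hρ : ρ ^ 2 < 1) (x y : ℝ) :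
    bvnPdf m1 m2 s 1 ρ (x, y) =
      gpdf m2 1 y * gpdf (m1 + ρ * s * (y - m2)) (s ^ 2 * (1 - ρ ^ 2)) x := by
  have hr : (0:ℝ) < 1 - ρ ^ 2 := by linarith
  have hnorm : ((Real.sqrt (2 * Real.pi * 1))⁻¹ : ℝ) *
      (Real.sqrt (2 * Real.pi * (s ^ 2 * (1 - ρ ^ 2))))⁻¹ =
      (2 * Real.pi * s * 1 * Real.sqrt (1 - ρ ^ 2))⁻¹ := by
    rw [← mul_inv]
    congr 1
    have h1 : Real.sqrt (2 * Real.pi * 1) = Real.sqrt (2 * Real.pi) := by rw [mul_one]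
    have h2 : Real.sqrt (2 * Real.pi * (s ^ 2 * (1 - ρ ^ 2))) =
        Real.sqrt (2 * Real.pi) * (s * Real.sqrt (1 - ρ ^ 2)) := by
      rw [Real.sqrt_mul (by positivity), Real.sqrt_mul (by positivity : (0:ℝ) ≤ s ^ 2),
        Real.sqrt_sq hs.le]
    rw [h1, h2, mul_one]
    calc Real.sqrt (2 * Real.pi) * (Real.sqrt (2 * Real.pi) * (s * Real.sqrt (1 - ρ ^ 2)))
        = (Real.sqrt (2 * Real.pi) * Real.sqrt (2 * Real.pi)) * s * Real.sqrt (1 - ρ ^ 2) := by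
          ring
      _ = 2 * Real.pi * s * Real.sqrt (1 - ρ ^ 2) := by
          rw [Real.mul_self_sqrt (by positivity)]
  have hexp : -(1 / (2 * (1 - ρ ^ 2))) *
      (((x - m1) / s) ^ 2 - 2 * ρ * ((x - m1) / s) * ((y - m2) / 1) + ((y - m2) / 1) ^ 2) =
      -(y - m2) ^ 2 / (2 * 1) +
        -(x - (m1 + ρ * s * (y - m2))) ^ 2 / (2 * (s ^ 2 * (1 - ρ ^ 2))) := by
    field_simp
    ring
  unfold bvnPdf gpdf
  dsimp only
  rw [hexp, Real.exp_add, ← hnorm]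
  ring

lemma map_fst_wd {f : ℝ × ℝ → ℝ≥0∞} (hf : Measurable f) :
    ((volume : Measure (ℝ × ℝ)).withDensity f).map Prod.fst =
      (volume : Measure ℝ).withDensity fun x => ∫⁻ y, f (x, y) := by
  ext A hA
  rw [Measure.map_apply measurable_fst hA, withDensity_apply _ (hA.preimage measurable_fst),
    withDensity_apply _ hA]
  have hA' : Prod.fst ⁻¹' A = A ×ˢ (Set.univ : Set ℝ) := Set.prod_univ.symm
  rw [hA', Measure.volume_eq_prod, ← Measure.prod_restrict, Measure.restrict_univ,
    MeasureTheory.lintegral_prod _ hf.aemeasurable]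

lemma map_snd_wd {f : ℝ × ℝ → ℝ≥0∞} (hf : Measurable f) :
    ((volume : Measure (ℝ × ℝ)).withDensity f).map Prod.snd =
      (volume : Measure ℝ).withDensity fun y => ∫⁻ x, f (x, y) := by
  ext A hA
  rw [Measure.map_apply measurable_snd hA, withDensity_apply _ (hA.preimage measurable_snd),
    withDensity_apply _ hA]
  have hA' : Prod.snd ⁻¹' A = (Set.univ : Set ℝ) ×ˢ A := Set.univ_prod.symm
  rw [hA', Measure.volume_eq_prod, ← Measure.prod_restrict, Measure.restrict_univ,
    MeasureTheory.lintegral_prod_symm _ hf.aemeasurable]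

theorem stmt7 {Ω : Type*} [MeasurableSpace Ω] (P : Measure Ω) [IsProbabilityMeasure P]
    (θ γ σ vθ ρ d : ℝ) (hσ : 0 < σ) (hv : 0 < vθ) (hρ : ρ ∈ Set.Ioo (-1 : ℝ) 1)
    (hd : 0 < d) (θhat γhat : Ω → ℝ) (hθm : Measurable θhat) (hγm : Measurable γhat)
    (hjoint : Measure.map (fun ω => (θhat ω, γhat ω)) P =
      (volume : Measure (ℝ × ℝ)).withDensity
        (fun p => ENNReal.ofReal (bvnPdf θ γ (σ * Real.sqrt vθ) 1 ρ p))) :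
    ∫ ω, (if |γhat ω| ≤ d then θhat ω - ρ * σ * Real.sqrt vθ * γhat ω else θhat ω) ∂P =
      θ - ρ * σ * Real.sqrt vθ * ∫ z in (-d)..d, z * stdφ (z - γ) := by
  set s : ℝ := σ * Real.sqrt vθ with hs_def
  have hs : 0 < s := by positivity
  have hρ2 : ρ ^ 2 < 1 := by nlinarith [hρ.1, hρ.2]
  have hr : (0:ℝ) < 1 - ρ ^ 2 := by linarith
  set c : ℝ := ρ * σ * Real.sqrt vθ with hc_def
  have hbc : Continuous fun p : ℝ × ℝ => bvnPdf θ γ s 1 ρ p := by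
    unfold bvnPdf; fun_prop
  have hbm : Measurable fun p : ℝ × ℝ => ENNReal.ofReal (bvnPdf θ γ s 1 ρ p) :=
    ENNReal.measurable_ofReal.comp hbc.measurable
  -- marginal lintegrals
  have marg1 : ∀ x : ℝ, ∫⁻ y, ENNReal.ofReal (bvnPdf θ γ s 1 ρ (x, y)) =
      ENNReal.ofReal (gpdf θ (s ^ 2) x) := by
    intro x
    have : ∀ y : ℝ, ENNReal.ofReal (bvnPdf θ γ s 1 ρ (x, y)) =
        ENNReal.ofReal (gpdf θ (s ^ 2) x) *
          ENNReal.ofReal (gpdf (γ + ρ * (x - θ) / s) (1 - ρ ^ 2) y) := by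
      intro y
      rw [bvnPdf_factor_fst hs hρ2, ENNReal.ofReal_mul (gpdf_nonneg _ _ _)]
    simp_rw [this]
    rw [lintegral_const_mul' _ _ ENNReal.ofReal_ne_top, lintegral_gpdf _ hr, mul_one]
  have marg2 : ∀ y : ℝ, ∫⁻ x, ENNReal.ofReal (bvnPdf θ γ s 1 ρ (x, y)) =
      ENNReal.ofReal (gpdf γ 1 y) := by
    intro y
    have : ∀ x : ℝ, ENNReal.ofReal (bvnPdf θ γ s 1 ρ (x, y)) =
        ENNReal.ofReal (gpdf γ 1 y) *
          ENNReal.ofReal (gpdf (θ + ρ * s * (y - γ)) (s ^ 2 * (1 - ρ ^ 2)) x) := by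
      intro x
      rw [bvnPdf_factor_snd hs hρ2, ENNReal.ofReal_mul (gpdf_nonneg _ _ _)]
    simp_rw [this]
    rw [lintegral_const_mul' _ _ ENNReal.ofReal_ne_top,
      lintegral_gpdf _ (by positivity : (0:ℝ) < s ^ 2 * (1 - ρ ^ 2)), mul_one]
  -- marginal laws
  have hmapθ : Measure.map θhat P =
      (volume : Measure ℝ).withDensity fun x => ENNReal.ofReal (gpdf θ (s ^ 2) x) := by
    have hcomp : θhat = Prod.fst ∘ fun ω => (θhat ω, γhat ω) := rfl
    rw [hcomp, ← Measure.map_map measurable_fst (hθm.prodMk hγm), hjoint, map_fst_wd hbm]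
    congr 1
    funext x
    exact marg1 x
  have hmapγ : Measure.map γhat P =
      (volume : Measure ℝ).withDensity fun y => ENNReal.ofReal (gpdf γ 1 y) := by
    have hcomp : γhat = Prod.snd ∘ fun ω => (θhat ω, γhat ω) := rfl
    rw [hcomp, ← Measure.map_map measurable_snd (hθm.prodMk hγm), hjoint, map_snd_wd hbm]
    congr 1
    funext y
    exact marg2 y
  -- measurability of the NNReal-valued densities
  have hdmθ : Measurable fun x : ℝ => (gpdf θ (s ^ 2) x).toNNReal :=
    (gpdf_continuous θ (s ^ 2)).measurable.real_toNNReal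
  have hdmγ : Measurable fun y : ℝ => (gpdf γ 1 y).toNNReal :=
    (gpdf_continuous γ 1).measurable.real_toNNReal
  have hofθ : (fun x : ℝ => ENNReal.ofReal (gpdf θ (s ^ 2) x)) =
      fun x : ℝ => ((gpdf θ (s ^ 2) x).toNNReal : ℝ≥0∞) := rfl
  have hofγ : (fun y : ℝ => ENNReal.ofReal (gpdf γ 1 y)) =
      fun y : ℝ => ((gpdf γ 1 y).toNNReal : ℝ≥0∞) := rfl
  -- integrability of θhat
  have hintθ : Integrable θhat P := by
    have h1 : Integrable (fun x : ℝ => x) (Measure.map θhat P) := by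
      rw [hmapθ, hofθ, integrable_withDensity_iff_integrable_smul hdmθ]
      have : (fun x : ℝ => (gpdf θ (s ^ 2) x).toNNReal • x) =
          fun x : ℝ => x * gpdf θ (s ^ 2) x := by
        funext x
        simp [NNReal.smul_def, Real.coe_toNNReal _ (gpdf_nonneg θ (s ^ 2) x)]
        ring
      rw [this]
      exact integrable_id_mul_gpdf θ (by positivity)
    exact (integrable_map_measure aestronglyMeasurable_id hθm.aemeasurable).mp h1
  -- the truncated γhat
  set g : ℝ → ℝ := fun y => if |y| ≤ d then y else 0 with hg_def
  have hgm : Measurable g := by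
    apply Measurable.ite _ measurable_id measurable_const
    exact measurableSet_le measurable_abs measurable_const
  have hintγ : Integrable (fun ω => g (γhat ω)) P := by
    refine Integrable.mono' (integrable_const d) ((hgm.comp hγm).aestronglyMeasurable) ?_
    filter_upwards with ω
    simp only [g]
    split_ifs with h
    · simpa using h
    · simp [hd.le]
  -- value of ∫ θhat
  have hEθ : ∫ ω, θhat ω ∂P = θ := by
    have h1 : ∫ ω, θhat ω ∂P = ∫ x, x ∂(Measure.map θhat P) :=
      (integral_map hθm.aemeasurable aestronglyMeasurable_id).symm
    rw [h1, hmapθ, hofθ, integral_withDensity_eq_integral_smul hdmθ]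
    have : (fun x : ℝ => (gpdf θ (s ^ 2) x).toNNReal • x) =
        fun x : ℝ => x * gpdf θ (s ^ 2) x := by
      funext x
      simp [NNReal.smul_def, Real.coe_toNNReal _ (gpdf_nonneg θ (s ^ 2) x)]
      ring
    rw [this]
    exact integral_id_mul_gpdf θ (by positivity)
  -- value of ∫ g (γhat)
  have hEγ : ∫ ω, g (γhat ω) ∂P = ∫ z in (-d)..d, z * stdφ (z - γ) := by
    have h1 : ∫ ω, g (γhat ω) ∂P = ∫ y, g y ∂(Measure.map γhat P) :=
      (integral_map hγm.aemeasurable hgm.aestronglyMeasurable).symm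
    rw [h1, hmapγ, hofγ, integral_withDensity_eq_integral_smul hdmγ]
    have h2 : (fun y : ℝ => (gpdf γ 1 y).toNNReal • g y) =
        (Set.Icc (-d) d).indicator fun y => y * stdφ (y - γ) := by
      funext y
      rw [Set.indicator_apply]
      have hmem : y ∈ Set.Icc (-d) d ↔ |y| ≤ d := by
        rw [Set.mem_Icc, abs_le]
      have hgs : gpdf γ 1 y * y = y * stdφ (y - γ) := by
        unfold gpdf stdφ
        rw [mul_one, mul_one]
        ring
      by_cases h : |y| ≤ d
      · rw [if_pos (hmem.mpr h)]
        simp only [g, if_pos h, NNReal.smul_def,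
          Real.coe_toNNReal _ (gpdf_nonneg γ 1 y), smul_eq_mul]
        rw [← hgs]
      · rw [if_neg (fun hy => h (hmem.mp hy))]
        simp [g, if_neg h]
    rw [h2, integral_indicator measurableSet_Icc,
      MeasureTheory.integral_Icc_eq_integral_Ioc,
      ← intervalIntegral.integral_of_le (by linarith : -d ≤ d)]
  -- rewrite the integrand and conclude
  have hfun : (fun ω => if |γhat ω| ≤ d then θhat ω - ρ * σ * Real.sqrt vθ * γhat ω
      else θhat ω) = fun ω => θhat ω - c * g (γhat ω) := by
    funext ω
    simp only [g]
    split_ifs with h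
    · rw [hc_def]
    · rw [mul_zero, sub_zero]
  rw [hfun, integral_sub hintθ (hintγ.const_mul c), integral_const_mul, hEθ, hEγ]
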